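/- For all k ≥ 2, every deterministic k-way branching program solving the function tree evaluation problem FT^2_2(k) (height 2) has at least (k+1)^2 states. -/

import Mathlib

/-! Framework: the tree evaluation problem and deterministic k-way branching programs.

The balanced binary tree of height `h` has nodes numbered heap-style `1, …, 2^h - 1`:
the root is node `1` and the children of node `i` are `2i` and `2i+1`.
Elements of `[k] = {1,…,k}` are represented by `Fin k` (the element `1 ∈ [k]`
corresponds to `(0 : Fin k)`). -/

/-- Node `i` is a leaf of the height-`h` balanced binary tree. -/
def IsLeafNode (h i : ℕ) : Prop := 2 ^ (h - 1) ≤ i ∧ i < 2 ^ h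

/-- Node `i` is an internal node of the height-`h` balanced binary tree. -/
def IsInternalNode (h i : ℕ) : Prop := 1 ≤ i ∧ i < 2 ^ (h - 1)

/-- An input to the height-`h` tree evaluation problem over `[k]`: a binary function on `[k]`
for each internal node and a value in `[k]` for each leaf (values at irrelevant indices
are ignored). -/
structure TEInput (h k : ℕ) where
  f : ℕ → Fin k → Fin k → Fin k
  leaf : ℕ → Fin k

/-- Auxiliary recursion (on fuel) computing node values. -/
def TEInput.valAux {h k : ℕ} (I : TEInput h k) : ℕ → ℕ → Fin k
  | 0, i => I.leaf i
  | m + 1, i =>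
      if 2 ^ (h - 1) ≤ i then I.leaf i
      else I.f i (I.valAux m (2 * i)) (I.valAux m (2 * i + 1))

/-- The value `v_i^I` of node `i`: the leaf value if `i` is a leaf, and
`f_i^I (v_{2i}^I, v_{2i+1}^I)` if `i` is an internal node. -/
def TEInput.val {h k : ℕ} (I : TEInput h k) (i : ℕ) : Fin k := I.valAux h i

/-- The input variables of the tree evaluation problem: one variable `f_i(a,b)` for each
internal node `i` and `a b ∈ [k]`, and one variable `l_i` for each leaf `i`. -/
inductive TEVar (h k : ℕ) where
  | internal (i : ℕ) (hi : IsInternalNode h i) (a b : Fin k) : TEVar h k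
  | leaf (i : ℕ) (hi : IsLeafNode h i) : TEVar h k

/-- The value of a variable under an input. -/
def TEInput.evalVar {h k : ℕ} (I : TEInput h k) : TEVar h k → Fin k
  | .internal i _ a b => I.f i a b
  | .leaf i _ => I.leaf i

/-- The node a variable belongs to. -/
def TEVar.node {h k : ℕ} : TEVar h k → ℕ
  | .internal i _ _ _ => i
  | .leaf i _ => i

/-- `X` is the thrifty `i` variable of input `I`: it is `f_i(v_{2i}^I, v_{2i+1}^I)`
if `i` is an internal node, and `l_i` if `i` is a leaf. -/
def IsThriftyVarOf {h k : ℕ} (I : TEInput h k) (i : ℕ) : TEVar h k → Prop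
  | .internal j _ a b => j = i ∧ a = I.val (2 * j) ∧ b = I.val (2 * j + 1)
  | .leaf j _ => j = i

/-- A deterministic `k`-way branching program with variables indexed by `V` and
output set `R`: a set of states (of cardinality `size`), a start state, each state
labeled either with a variable to query (non-output states, with `k` out-edges
labeled `1,…,k`) or with an output value (output sink states). -/
structure DetBP (V : Type) (k : ℕ) (R : Type) where
  size : ℕ
  start : Fin size
  label : Fin size → V ⊕ R
  next : Fin size → Fin k → Fin size

namespace DetBP

variable {V : Type} {k : ℕ} {R : Type}

/-- One step of computation on input `x`: from a state querying variable `v`, follow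
the out-edge labeled `x v`; output states are sinks. -/
def step (B : DetBP V k R) (x : V → Fin k) (s : Fin B.size) : Fin B.size :=
  match B.label s with
  | .inl v => B.next s (x v)
  | .inr _ => s

/-- The state of the computation path of `x` at time `t`. -/
def run (B : DetBP V k R) (x : V → Fin k) (t : ℕ) : Fin B.size :=
  (B.step x)^[t] B.start

/-- The depth of `B` is at most `D`: on every input, the computation path reaches an
output state within its first `D` states. -/
def DepthLE (B : DetBP V k R) (D : ℕ) : Prop :=
  ∀ x : V → Fin k, ∃ t < D, (B.label (B.run x t)).isRight = true

/-- `B` solves the function tree evaluation problem `FT^h_2(k)`: on every input `I`, the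
computation path ends in the output state labeled with the root value `v_1^I`. -/
def SolvesFT {h : ℕ} (B : DetBP (TEVar h k) k (Fin k)) : Prop :=
  ∀ I : TEInput h k, ∃ t, B.label (B.run I.evalVar t) = Sum.inr (I.val 1)

/-- `B` solves the decision tree evaluation problem `BT^h_2(k)`: on every input `I`, the
computation path ends in the output state labeled with whether `v_1^I = 1`
(the element `1 ∈ [k]` being `(0 : Fin k)`). -/
def SolvesBT {h : ℕ} (B : DetBP (TEVar h k) k Bool) : Prop :=
  ∀ I : TEInput h k, ∃ t, B.label (B.run I.evalVar t) = Sum.inr (decide ((I.val 1 : Fin k).val = 0))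

/-- `B` is thrifty: on every input `I`, every query `f_i(a,b)` made along the computation
path of `I` satisfies `a = v_{2i}^I` and `b = v_{2i+1}^I`. -/
def Thrifty {h : ℕ} (B : DetBP (TEVar h k) k R) : Prop :=
  ∀ (I : TEInput h k) (t i : ℕ) (hi : IsInternalNode h i) (a b : Fin k),
    B.label (B.run I.evalVar t) = Sum.inl (TEVar.internal i hi a b) →
    a = I.val (2 * i) ∧ b = I.val (2 * i + 1)

end DetBP

/-! ### Auxiliary development for the lower bound -/

namespace DetBP

variable {V : Type} {k : ℕ} {R : Type} (B : DetBP V k R)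

lemma step_inr {x : V → Fin k} {s : Fin B.size} {r : R} (h : B.label s = .inr r) :
    B.step x s = s := by unfold step; rw [h]

lemma step_inl {x : V → Fin k} {s : Fin B.size} {v : V} (h : B.label s = .inl v) :
    B.step x s = B.next s (x v) := by unfold step; rw [h]

lemma run_succ (x : V → Fin k) (t : ℕ) :
    B.run x (t + 1) = B.step x (B.run x t) := Function.iterate_succ_apply' _ _ _

lemma run_add (x : V → Fin k) (m u : ℕ) :
    B.run x (m + u) = (B.step x)^[u] (B.run x m) := by
  unfold run; rw [Nat.add_comm, Function.iterate_add_apply]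

lemma run_stable {x : V → Fin k} {T : ℕ} {r : R}
    (h : B.label (B.run x T) = .inr r) (u : ℕ) :
    B.run x (T + u) = B.run x T := by
  induction u with
  | zero => rfl
  | succ n ih =>
    rw [← Nat.add_assoc, run_succ, ih, B.step_inr h]

lemma iter_agree {x y : V → Fin k} {s : Fin B.size} (T : ℕ)
    (h : ∀ t < T, ∀ v, B.label ((B.step x)^[t] s) = .inl v → x v = y v) :
    (B.step x)^[T] s = (B.step y)^[T] s := by
  induction T with
  | zero => rfl
  | succ n ih =>
    rw [Function.iterate_succ_apply', Function.iterate_succ_apply',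
      ← ih (fun t ht v hv => h t (ht.trans n.lt_succ_self) v hv)]
    cases hl : B.label ((B.step x)^[n] s) with
    | inl v => rw [B.step_inl hl, B.step_inl hl, h n n.lt_succ_self v hl]
    | inr r => rw [B.step_inr hl, B.step_inr hl]

lemma output_eq {x : V → Fin k} {T T' : ℕ} {r r' : R}
    (h : B.label (B.run x T) = .inr r) (h' : B.label (B.run x T') = .inr r') :
    r = r' := by
  rcases Nat.le_total T T' with hle | hle
  · obtain ⟨u, rfl⟩ := Nat.exists_eq_add_of_le hle
    rw [B.run_stable h, h] at h'
    exact Sum.inr.inj h'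
  · obtain ⟨u, rfl⟩ := Nat.exists_eq_add_of_le hle
    rw [B.run_stable h', h'] at h
    exact (Sum.inr.inj h).symm

end DetBP

section TEAux

variable {k : ℕ}

/-- The canonical "addition" input with leaves `a`, `b`. -/
def inp (a b : Fin k) : TEInput 2 k :=
  ⟨fun _ x y => x + y, fun j => if j = 2 then a else b⟩

/-- The input with the root function modified at `(a, b)` to output `c`. -/
def inpF (a b c : Fin k) : TEInput 2 k :=
  ⟨fun _ x y => if x = a ∧ y = b then c else x + y, fun j => if j = 2 then a else b⟩

lemma val_root (I : TEInput 2 k) : I.val 1 = I.f 1 (I.leaf 2) (I.leaf 3) := by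
  norm_num [TEInput.val, TEInput.valAux]

lemma inp_val (a b : Fin k) : (inp a b).val 1 = a + b := by
  rw [val_root]; simp [inp]

lemma inpF_val (a b c : Fin k) : (inpF a b c).val 1 = c := by
  rw [val_root]; simp [inpF]

lemma internal_eq_one {j : ℕ} (hj : IsInternalNode 2 j) : j = 1 := by
  obtain ⟨ha, hb⟩ := hj; norm_num at hb; omega

lemma leaf_cases {j : ℕ} (hj : IsLeafNode 2 j) : j = 2 ∨ j = 3 := by
  obtain ⟨ha, hb⟩ := hj; norm_num at ha hb; omega

def hI1 : IsInternalNode 2 1 := ⟨le_refl 1, by norm_num⟩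
def hL2 : IsLeafNode 2 2 := ⟨by norm_num, by norm_num⟩
def hL3 : IsLeafNode 2 3 := ⟨by norm_num, by norm_num⟩

/-- The value answered when leaf `j` of `inp a b` is queried. -/
def ansv (j : ℕ) (a b : Fin k) : Fin k := if j = 2 then a else b

lemma ansv_two (a b : Fin k) : ansv 2 a b = a := if_pos rfl

lemma ansv_three (a b : Fin k) : ansv 3 a b = b := if_neg (by norm_num)

lemma fin_one_ne_zero (hk : 2 ≤ k) [NeZero k] : (1 : Fin k) ≠ 0 := by
  intro h
  have := congrArg Fin.val h
  simp [Fin.val_one' k, Fin.val_zero] at this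
  omega

variable (B : DetBP (TEVar 2 k) k (Fin k))

lemma must_query (hB : B.SolvesFT) (I J : TEInput 2 k) (v : TEVar 2 k)
    (hagree : ∀ w, w ≠ v → I.evalVar w = J.evalVar w)
    (hval : I.val 1 ≠ J.val 1) :
    ∃ t, B.label (B.run I.evalVar t) = .inl v := by
  by_contra hq
  push_neg at hq
  have hrun : ∀ t, B.run I.evalVar t = B.run J.evalVar t := by
    intro t
    exact B.iter_agree t (fun t' _ w hw => by
      by_cases hwv : w = v
      · exact absurd (hwv ▸ hw) (hq t')
      · exact hagree w hwv)
  obtain ⟨T, hT⟩ := hB I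
  obtain ⟨T', hT'⟩ := hB J
  rw [hrun] at hT
  exact hval (B.output_eq hT hT')

lemma query_internal (hk : 2 ≤ k) (hB : B.SolvesFT) (a b : Fin k) :
    ∃ t, B.label (B.run (inp a b).evalVar t) = .inl (.internal 1 hI1 a b) := by
  haveI : NeZero k := ⟨by omega⟩
  apply must_query B hB (inp a b) (inpF a b (a + b + 1))
  · intro w hw
    cases w with
    | internal j hj x y =>
      have hj1 : j = 1 := internal_eq_one hj
      subst hj1
      show x + y = if x = a ∧ y = b then a + b + 1 else x + y
      by_cases hxy : x = a ∧ y = b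
      · exfalso
        obtain ⟨rfl, rfl⟩ := hxy
        exact hw (by cases proof_irrel hj hI1; rfl)
      · rw [if_neg hxy]
    | leaf j hj => rfl
  · rw [inp_val, inpF_val]
    intro h
    exact fin_one_ne_zero hk (left_eq_add.mp h)

lemma query_leaf2 (hk : 2 ≤ k) (hB : B.SolvesFT) (a b : Fin k) :
    ∃ t, B.label (B.run (inp a b).evalVar t) = .inl (.leaf 2 hL2) := by
  haveI : NeZero k := ⟨by omega⟩
  apply must_query B hB (inp a b) (inp (a + 1) b)
  · intro w hw
    cases w with
    | internal j hj x y => rfl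
    | leaf j hj =>
      rcases leaf_cases hj with rfl | rfl
      · exact absurd (by cases proof_irrel hj hL2; rfl) hw
      · rfl
  · rw [inp_val, inp_val]
    intro h
    have : a = a + 1 := add_right_cancel h
    exact fin_one_ne_zero hk (left_eq_add.mp this)

lemma query_leaf3 (hk : 2 ≤ k) (hB : B.SolvesFT) (a b : Fin k) :
    ∃ t, B.label (B.run (inp a b).evalVar t) = .inl (.leaf 3 hL3) := by
  haveI : NeZero k := ⟨by omega⟩
  apply must_query B hB (inp a b) (inp a (b + 1))
  · intro w hw
    cases w with
    | internal j hj x y => rfl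
    | leaf j hj =>
      rcases leaf_cases hj with rfl | rfl
      · rfl
      · exact absurd (by cases proof_irrel hj hL3; rfl) hw
  · rw [inp_val, inp_val]
    intro h
    have : b = b + 1 := add_left_cancel h
    exact fin_one_ne_zero hk (left_eq_add.mp this)

lemma output_exists (hk : 2 ≤ k) (hB : B.SolvesFT) (r : Fin k) :
    ∃ s : Fin B.size, B.label s = .inr r := by
  haveI : NeZero k := ⟨by omega⟩
  obtain ⟨t, ht⟩ := hB (inp r 0)
  exact ⟨_, by rwa [inp_val, add_zero] at ht⟩

open Classical in
/-- The key lemma: there are at least `k + 1` states querying leaf variables. -/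
lemma leaf_states_card (hk : 2 ≤ k) (hB : B.SolvesFT) :
    k + 1 ≤ (Finset.univ.filter
      (fun s => ∃ j hj, B.label s = Sum.inl (TEVar.leaf j hj))).card := by
  haveI : NeZero k := ⟨by omega⟩
  set L := Finset.univ.filter
      (fun s => ∃ j hj, B.label s = Sum.inl (TEVar.leaf j hj)) with hLdef
  by_contra hcard
  push_neg at hcard
  have hLk : L.card ≤ k := by omega
  set x : Fin k → Fin k → TEVar 2 k → Fin k := fun a b => (inp a b).evalVar with hxdef
  -- output times
  have hout : ∀ a b : Fin k, ∃ T, B.label (B.run (x a b) T) = .inr (a + b) := by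
    intro a b
    obtain ⟨T, hT⟩ := hB (inp a b)
    exact ⟨T, by rwa [inp_val] at hT⟩
  choose T hT using hout
  have out_tail : ∀ a b u, T a b ≤ u → B.label (B.run (x a b) u) = .inr (a + b) := by
    intro a b u hu
    obtain ⟨d, rfl⟩ := Nat.exists_eq_add_of_le hu
    rw [B.run_stable (hT a b)]
    exact hT a b
  -- leaf query times are at most T
  have hleafle : ∀ a b t j hj,
      B.label (B.run (x a b) t) = .inl (.leaf j hj) → t ≤ T a b := by
    intro a b t j hj hq
    by_contra hgt
    rw [out_tail a b t (by omega)] at hq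
    cases hq
  -- the finite set of leaf-query times
  set LT : Fin k → Fin k → Finset ℕ := fun a b =>
    (Finset.range (T a b + 1)).filter
      (fun t => ∃ j hj, B.label (B.run (x a b) t) = .inl (.leaf j hj)) with hLTdef
  have hmemLT : ∀ a b t j hj, B.label (B.run (x a b) t) = .inl (.leaf j hj) →
      t ∈ LT a b := by
    intro a b t j hj hq
    refine Finset.mem_filter.mpr ⟨Finset.mem_range.mpr ?_, j, hj, hq⟩
    have := hleafle a b t j hj hq
    omega
  have hne : ∀ a b, (LT a b).Nonempty := by
    intro a b
    obtain ⟨t, ht⟩ := query_leaf2 B hk hB a b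
    exact ⟨t, hmemLT a b t 2 hL2 ht⟩
  set τ : Fin k → Fin k → ℕ := fun a b => (LT a b).max' (hne a b) with hτdef
  have hτq : ∀ a b, ∃ j hj, B.label (B.run (x a b) (τ a b)) = .inl (.leaf j hj) :=
    fun a b => (Finset.mem_filter.mp ((LT a b).max'_mem (hne a b))).2
  choose jj hjj hlab using hτq
  have hafter : ∀ a b t, τ a b < t → ∀ j hj,
      B.label (B.run (x a b) t) ≠ .inl (.leaf j hj) := by
    intro a b t ht j hj hq
    exact absurd ((LT a b).le_max' t (hmemLT a b t j hj hq)) (not_le.mpr ht)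
  set cover : Fin k → Fin k → Fin B.size := fun a b => B.run (x a b) (τ a b) with hcovdef
  -- the answer read at a leaf query
  have hx_leaf : ∀ a b j hj, x a b (TEVar.leaf j hj) = ansv j a b := fun _ _ _ _ => rfl
  -- TAIL: after visiting `cover a₀ b₀` with the matching answer, paths coincide
  have tail : ∀ a₀ b₀ a b t, B.run (x a b) t = cover a₀ b₀ →
      ansv (jj a₀ b₀) a b = ansv (jj a₀ b₀) a₀ b₀ →
      ∀ u, B.run (x a b) (t + 1 + u) = B.run (x a₀ b₀) (τ a₀ b₀ + 1 + u) := by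
    intro a₀ b₀ a b t hs hans u
    have h1' : B.run (x a b) (t + 1) =
        B.next (cover a₀ b₀) (ansv (jj a₀ b₀) a b) := by
      rw [B.run_succ, hs, B.step_inl (hlab a₀ b₀), hx_leaf]
    have h2' : B.run (x a₀ b₀) (τ a₀ b₀ + 1) =
        B.next (cover a₀ b₀) (ansv (jj a₀ b₀) a₀ b₀) := by
      rw [B.run_succ, B.step_inl (hlab a₀ b₀), hx_leaf]
    rw [B.run_add _ (t + 1) u, B.run_add _ (τ a₀ b₀ + 1) u, h1', h2', hans]
    symm
    apply B.iter_agree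
    intro u' _ v hv
    have hv' : B.label (B.run (x a₀ b₀) (τ a₀ b₀ + 1 + u')) = .inl v := by
      rw [B.run_add _ (τ a₀ b₀ + 1) u', h2']
      exact hv
    cases v with
    | internal j hj p q => rfl
    | leaf j hj => exact absurd hv' (hafter a₀ b₀ _ (by omega) j hj)
  -- the key injection
  have key_inj : ∀ a b a' b', cover a b = cover a' b' →
      ansv (jj a b) a b = ansv (jj a' b') a' b' → (a, b) = (a', b') := by
    intro a b a' b' hc hans
    have hjj_eq : jj a b = jj a' b' := by
      have h1 := hlab a b
      have hc2 : B.run (x a b) (τ a b) = B.run (x a' b') (τ a' b') := hc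
      rw [hc2, hlab a' b'] at h1
      injection h1 with h2
      injection h2 with h3
      exact h3.symm
    rw [hjj_eq] at hans
    have htails := tail a' b' a b (τ a b) hc hans
      (T a b + T a' b')
    have o1 := out_tail a b (τ a b + 1 + (T a b + T a' b')) (by omega)
    have o2 := out_tail a' b' (τ a' b' + 1 + (T a b + T a' b')) (by omega)
    rw [htails, o2] at o1
    have hsum : a' + b' = a + b := Sum.inr.inj o1
    rcases leaf_cases (hjj a' b') with hj2 | hj3
    · rw [hj2, ansv_two, ansv_two] at hans
      subst hans
      have : b = b' := add_left_cancel hsum.symm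
      rw [this]
    · rw [hj3, ansv_three, ansv_three] at hans
      subst hans
      have : a = a' := add_right_cancel hsum.symm
      rw [this]
  set key : Fin k × Fin k → Fin B.size × Fin k :=
    fun p => (cover p.1 p.2, ansv (jj p.1 p.2) p.1 p.2) with hkeydef
  have hinj : Function.Injective key := by
    intro p q h
    have h1 : cover p.1 p.2 = cover q.1 q.2 := congrArg Prod.fst h
    have h2 : ansv (jj p.1 p.2) p.1 p.2 = ansv (jj q.1 q.2) q.1 q.2 :=
      congrArg Prod.snd h
    have := key_inj p.1 p.2 q.1 q.2 h1 h2
    exact Prod.ext (congrArg Prod.fst this) (congrArg Prod.snd this)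
  set Lc : Finset (Fin B.size) := Finset.univ.image (fun p : Fin k × Fin k => cover p.1 p.2)
    with hLcdef
  have hcovL : ∀ a b, cover a b ∈ L := by
    intro a b
    exact Finset.mem_filter.mpr ⟨Finset.mem_univ _, jj a b, hjj a b, hlab a b⟩
  have hLcL : Lc ⊆ L := by
    intro s hs
    obtain ⟨p, _, rfl⟩ := Finset.mem_image.mp hs
    exact hcovL p.1 p.2
  have himg : Finset.univ.image key ⊆ Lc ×ˢ Finset.univ := by
    intro q hq
    obtain ⟨p, _, rfl⟩ := Finset.mem_image.mp hq
    exact Finset.mem_product.mpr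
      ⟨Finset.mem_image.mpr ⟨p, Finset.mem_univ _, rfl⟩, Finset.mem_univ _⟩
  have hkk : (Finset.univ.image key).card = k * k := by
    rw [Finset.card_image_of_injective _ hinj, Finset.card_univ,
      Fintype.card_prod, Fintype.card_fin]
  have hLc_card : (Lc ×ˢ (Finset.univ : Finset (Fin k))).card ≤ k * k := by
    rw [Finset.card_product, Finset.card_univ, Fintype.card_fin]
    exact Nat.mul_le_mul ((Finset.card_le_card hLcL).trans hLk) (le_refl k)
  have heq : Finset.univ.image key = Lc ×ˢ Finset.univ :=
    Finset.eq_of_subset_of_card_le himg (by omega)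
  have hLcL_eq : Lc = L := by
    apply Finset.eq_of_subset_of_card_le hLcL
    have : k * k ≤ Lc.card * k := by
      rw [← hkk, heq, Finset.card_product, Finset.card_univ, Fintype.card_fin]
    have hLc_ge : k ≤ Lc.card := Nat.le_of_mul_le_mul_right this (by omega)
    omega
  -- final contradiction: the other leaf queried on the path of (0,0)
  obtain ⟨t, j', hj', hne', hq⟩ :
      ∃ t j' hj', j' ≠ jj 0 0 ∧ B.label (B.run (x 0 0) t) = .inl (.leaf j' hj') := by
    rcases leaf_cases (hjj 0 0) with h | h
    · obtain ⟨t, ht⟩ := query_leaf3 B hk hB 0 0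
      exact ⟨t, 3, hL3, by omega, ht⟩
    · obtain ⟨t, ht⟩ := query_leaf2 B hk hB 0 0
      exact ⟨t, 2, hL2, by omega, ht⟩
  have htle : t ≤ τ 0 0 := (LT 0 0).le_max' t (hmemLT 0 0 t j' hj' hq)
  have htne : t ≠ τ 0 0 := by
    intro h
    rw [h, hlab 0 0] at hq
    injection hq with h1
    injection h1 with h2
    exact hne' h2.symm
  have htlt : t < τ 0 0 := lt_of_le_of_ne htle htne
  -- the state visited at time t is some cover a' b'
  have hs'Lc : B.run (x 0 0) t ∈ Lc := by
    rw [hLcL_eq]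
    exact Finset.mem_filter.mpr ⟨Finset.mem_univ _, j', hj', hq⟩
  have hmem2 : (B.run (x 0 0) t, ansv j' (0 : Fin k) 0) ∈ Finset.univ.image key := by
    rw [heq]
    exact Finset.mem_product.mpr ⟨hs'Lc, Finset.mem_univ _⟩
  obtain ⟨p, _, hp⟩ := Finset.mem_image.mp hmem2
  obtain ⟨a', b'⟩ := p
  have hc' : cover a' b' = B.run (x 0 0) t := congrArg Prod.fst hp
  have ha' : ansv (jj a' b') a' b' = ansv j' 0 0 := congrArg Prod.snd hp
  have hjja' : jj a' b' = j' := by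
    have h1 := hlab a' b'
    have hc2 : B.run (x a' b') (τ a' b') = B.run (x 0 0) t := hc'
    rw [hc2, hq] at h1
    injection h1 with h2
    injection h2 with h3
    exact h3.symm
  have htails := tail a' b' 0 0 t hc'.symm (by rw [ha', hjja'])
    (τ 0 0 - (t + 1))
  have hτeq : t + 1 + (τ 0 0 - (t + 1)) = τ 0 0 := by omega
  rw [hτeq] at htails
  have := hlab 0 0
  rw [htails] at this
  exact hafter a' b' _ (by omega) (jj 0 0) (hjj 0 0) this

end TEAux

/-- For all `k ≥ 2`, every deterministic `k`-way branching program solving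
`FT^2_2(k)` has at least `(k+1)^2` states. -/
theorem stmt_1 (k : ℕ) (hk : 2 ≤ k) (B : DetBP (TEVar 2 k) k (Fin k))
    (hB : B.SolvesFT) : (k + 1) ^ 2 ≤ B.size := by
  classical
  haveI : NeZero k := ⟨by omega⟩
  -- states querying internal variables
  have hF : ∀ p : Fin k × Fin k, ∃ s : Fin B.size,
      B.label s = .inl (.internal 1 hI1 p.1 p.2) := by
    intro p
    obtain ⟨t, ht⟩ := query_internal B hk hB p.1 p.2
    exact ⟨_, ht⟩
  choose F hFl using hF
  -- output states
  choose O hOl using output_exists B hk hB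
  -- leaf-query states
  set L := Finset.univ.filter
      (fun s => ∃ j hj, B.label s = Sum.inl (TEVar.leaf j hj)) with hLdef
  have hL : k + 1 ≤ L.card := leaf_states_card B hk hB
  have hFinj : Function.Injective F := by
    intro p q h
    have h1 := hFl p
    rw [h, hFl q] at h1
    injection h1 with h2
    injection h2 with h3 h4 h5
    exact Prod.ext h4.symm h5.symm
  have hOinj : Function.Injective O := by
    intro r r' h
    have h1 := hOl r
    rw [h, hOl r'] at h1
    exact (Sum.inr.inj h1).symm
  set FS := Finset.univ.image F with hFSdef
  set OS := Finset.univ.image O with hOSdef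
  have hFS : FS.card = k * k := by
    rw [hFSdef, Finset.card_image_of_injective _ hFinj, Finset.card_univ,
      Fintype.card_prod, Fintype.card_fin]
  have hOS : OS.card = k := by
    rw [hOSdef, Finset.card_image_of_injective _ hOinj, Finset.card_univ,
      Fintype.card_fin]
  have d1 : Disjoint FS OS := by
    rw [Finset.disjoint_left]
    intro s hs hs'
    obtain ⟨p, _, rfl⟩ := Finset.mem_image.mp hs
    obtain ⟨r, _, hr⟩ := Finset.mem_image.mp hs'
    have h1 := hFl p
    rw [← hr, hOl r] at h1
    cases h1
  have d2 : Disjoint (FS ∪ OS) L := by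
    rw [Finset.disjoint_left]
    intro s hs hs'
    obtain ⟨_, j, hj, hlf⟩ := Finset.mem_filter.mp hs'
    rcases Finset.mem_union.mp hs with h | h
    · obtain ⟨p, _, rfl⟩ := Finset.mem_image.mp h
      have h1 := hFl p
      rw [hlf] at h1
      injection h1 with h2
      cases h2
    · obtain ⟨r, _, hr⟩ := Finset.mem_image.mp h
      rw [← hr, hOl r] at hlf
      cases hlf
  have hcards : ((FS ∪ OS) ∪ L).card = FS.card + OS.card + L.card := by
    rw [Finset.card_union_of_disjoint d2, Finset.card_union_of_disjoint d1]
  have hle : ((FS ∪ OS) ∪ L).card ≤ B.size := by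
    have := Finset.card_le_card (Finset.subset_univ ((FS ∪ OS) ∪ L))
    rwa [Finset.card_univ, Fintype.card_fin] at this
  have : (k + 1) ^ 2 = k * k + k + (k + 1) := by ring
  omega
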